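/- Let n ≥ 2 and 1 ≤ μ ≤ n be integers, and let λ₁, …, λₙ be positive real numbers with λ₁ = λ₂ = ⋯ = λ_μ, λ₁ < λ_l for all l > μ. Let T : {1,…,n} × {1,…,n} → ℝ be a symmetric array (T_{kl} = T_{lk} for all k, l) such that T_{kl} = 0 whenever 2 ≤ l ≤ μ. Then −2 Σ_{k=1}^n Σ_{l > μ} λ_k⁻¹ (λ_l − λ₁)⁻¹ T_{kl}² + Σ_{k=1}^n Σ_{l=1}^n λ_k⁻¹ λ_l⁻¹ T_{kl}² ≤ −2 Σ_{k > μ} λ₁⁻¹ ((λ_k − λ₁)⁻¹ − λ_k⁻¹) T_{k1}² + λ₁⁻² T_{11}². -/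

import Mathlib

open Finset

/-- The estimate used in the proof of Theorem 4.2 to group the gradient terms: if
`λ₁ = ⋯ = λ_μ` are positive, `λ₁ < λ_l` for `l > μ`, and `T` is a symmetric array
with `T_{kl} = 0` for `2 ≤ l ≤ μ` (here `T_{kl}` stands for `∇_k h_{1l}`), then
`−2 ∑_k ∑_{l>μ} λ_k⁻¹ (λ_l − λ₁)⁻¹ T_{kl}² + ∑_k ∑_l λ_k⁻¹ λ_l⁻¹ T_{kl}²
  ≤ −2 ∑_{k>μ} λ₁⁻¹ ((λ_k − λ₁)⁻¹ − λ_k⁻¹) T_{k1}² + λ₁⁻² T₁₁²`. -/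
theorem gradient_terms_estimate (n μ : ℕ) (hn : 2 ≤ n) (hμ1 : 1 ≤ μ) (hμn : μ ≤ n)
    (lam : ℕ → ℝ) (hpos : ∀ i ∈ Icc 1 n, 0 < lam i)
    (hmult : ∀ i ∈ Icc 1 μ, lam i = lam 1)
    (hgap : ∀ l ∈ Icc (μ + 1) n, lam 1 < lam l)
    (T : ℕ → ℕ → ℝ)
    (hsymm : ∀ k l, T k l = T l k)
    (hzero : ∀ k l, 2 ≤ l → l ≤ μ → T k l = 0) :
    -2 * ∑ k ∈ Icc 1 n, ∑ l ∈ Icc (μ + 1) n,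
          (lam k)⁻¹ * (lam l - lam 1)⁻¹ * (T k l) ^ 2
      + ∑ k ∈ Icc 1 n, ∑ l ∈ Icc 1 n, (lam k)⁻¹ * (lam l)⁻¹ * (T k l) ^ 2
    ≤ -2 * ∑ k ∈ Icc (μ + 1) n,
          (lam 1)⁻¹ * ((lam k - lam 1)⁻¹ - (lam k)⁻¹) * (T k 1) ^ 2
      + (lam 1)⁻¹ ^ 2 * (T 1 1) ^ 2 := by
  have hl1 : 0 < lam 1 := hpos 1 (by simp [mem_Icc]; omega)
  -- splitting lemma: a sum over Icc 1 n of a function vanishing on [2, μ]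
  have hsplit : ∀ g : ℕ → ℝ, (∀ l, 2 ≤ l → l ≤ μ → g l = 0) →
      ∑ l ∈ Icc 1 n, g l = g 1 + ∑ l ∈ Icc (μ + 1) n, g l := by
    intro g hg
    have h1 : Icc 1 n = Ioc 0 n := by rw [← Finset.Icc_add_one_left_eq_Ioc]; rfl
    have h2 : Icc (μ + 1) n = Ioc μ n := by rw [← Finset.Icc_add_one_left_eq_Ioc]
    have h3 : Icc 1 μ = Ioc 0 μ := by rw [← Finset.Icc_add_one_left_eq_Ioc]; rfl
    rw [h1, h2, ← Finset.sum_Ioc_consecutive g (Nat.zero_le μ) hμn]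
    congr 1
    rw [← h3]
    refine Finset.sum_eq_single_of_mem 1 (by simp [mem_Icc, hμ1]) ?_
    intro b hb hb1
    rw [mem_Icc] at hb
    exact hg b (by omega) hb.2
  have hTk1 : ∀ k, 2 ≤ k → k ≤ μ → T k 1 = 0 := fun k h2 hμ => by
    rw [hsymm]; exact hzero 1 k h2 hμ
  set B := Icc (μ + 1) n with hBdef
  -- decompose the second (full double) sum
  have e2 : ∑ k ∈ Icc 1 n, ∑ l ∈ Icc 1 n, (lam k)⁻¹ * (lam l)⁻¹ * (T k l) ^ 2
      = (lam 1)⁻¹ ^ 2 * (T 1 1) ^ 2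
        + ∑ l ∈ B, (lam 1)⁻¹ * (lam l)⁻¹ * (T 1 l) ^ 2
        + ∑ k ∈ B, (lam k)⁻¹ * (lam 1)⁻¹ * (T k 1) ^ 2
        + ∑ k ∈ B, ∑ l ∈ B, (lam k)⁻¹ * (lam l)⁻¹ * (T k l) ^ 2 := by
    have inner : ∀ k, ∑ l ∈ Icc 1 n, (lam k)⁻¹ * (lam l)⁻¹ * (T k l) ^ 2
        = (lam k)⁻¹ * (lam 1)⁻¹ * (T k 1) ^ 2
          + ∑ l ∈ B, (lam k)⁻¹ * (lam l)⁻¹ * (T k l) ^ 2 := fun k =>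
      hsplit _ (fun l h2 hμ => by rw [hzero k l h2 hμ]; ring)
    rw [Finset.sum_congr rfl (fun k _ => inner k), hsplit _ ?_, Finset.sum_add_distrib]
    · rw [sq]; ring
    · intro k h2 hμ
      rw [hTk1 k h2 hμ]
      have : ∀ l ∈ B, (lam k)⁻¹ * (lam l)⁻¹ * (T k l) ^ 2 = 0 := fun l _ => by
        rw [hsymm, hzero l k h2 hμ]; ring
      rw [Finset.sum_congr rfl this, Finset.sum_const_zero]; ring
  -- decompose the first double sum
  have e1 : ∑ k ∈ Icc 1 n, ∑ l ∈ B, (lam k)⁻¹ * (lam l - lam 1)⁻¹ * (T k l) ^ 2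
      = ∑ l ∈ B, (lam 1)⁻¹ * (lam l - lam 1)⁻¹ * (T 1 l) ^ 2
        + ∑ k ∈ B, ∑ l ∈ B, (lam k)⁻¹ * (lam l - lam 1)⁻¹ * (T k l) ^ 2 := by
    refine hsplit _ ?_
    intro k h2 hμ
    have : ∀ l ∈ B, (lam k)⁻¹ * (lam l - lam 1)⁻¹ * (T k l) ^ 2 = 0 := fun l _ => by
      rw [hsymm, hzero l k h2 hμ]; ring
    rw [Finset.sum_congr rfl this, Finset.sum_const_zero]
  rw [e1, e2]
  -- symmetrize the k = 1 row sums
  have s1 : ∑ l ∈ B, (lam 1)⁻¹ * (lam l - lam 1)⁻¹ * (T 1 l) ^ 2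
      = ∑ l ∈ B, (lam 1)⁻¹ * (lam l - lam 1)⁻¹ * (T l 1) ^ 2 :=
    Finset.sum_congr rfl fun l _ => by rw [hsymm 1 l]
  have s2 : ∑ l ∈ B, (lam 1)⁻¹ * (lam l)⁻¹ * (T 1 l) ^ 2
      = ∑ l ∈ B, (lam l)⁻¹ * (lam 1)⁻¹ * (T l 1) ^ 2 :=
    Finset.sum_congr rfl fun l _ => by rw [hsymm 1 l]; ring
  -- rewrite the RHS single sum as a difference
  have s3 : ∑ k ∈ B, (lam 1)⁻¹ * ((lam k - lam 1)⁻¹ - (lam k)⁻¹) * (T k 1) ^ 2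
      = ∑ k ∈ B, (lam 1)⁻¹ * (lam k - lam 1)⁻¹ * (T k 1) ^ 2
        - ∑ k ∈ B, (lam k)⁻¹ * (lam 1)⁻¹ * (T k 1) ^ 2 := by
    rw [← Finset.sum_sub_distrib]
    exact Finset.sum_congr rfl fun k _ => by ring
  -- the block inequality
  have hD : ∑ k ∈ B, ∑ l ∈ B, (lam k)⁻¹ * (lam l)⁻¹ * (T k l) ^ 2
      ≤ 2 * ∑ k ∈ B, ∑ l ∈ B, (lam k)⁻¹ * (lam l - lam 1)⁻¹ * (T k l) ^ 2 := by
    rw [Finset.mul_sum]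
    refine Finset.sum_le_sum fun k hk => ?_
    rw [Finset.mul_sum]
    refine Finset.sum_le_sum fun l hl => ?_
    rw [hBdef, mem_Icc] at hk hl
    have hk0 : 0 < lam k := hpos k (by rw [mem_Icc]; omega)
    have hl0 : 0 < lam l := hpos l (by rw [mem_Icc]; omega)
    have hgapl : lam 1 < lam l := hgap l (by rw [mem_Icc]; omega)
    have h1 : 0 < lam l - lam 1 := by linarith
    have h2 : (lam l)⁻¹ ≤ (lam l - lam 1)⁻¹ := by
      apply inv_anti₀ h1; linarith
    have h3 : 0 ≤ (lam k)⁻¹ * (T k l) ^ 2 := by positivity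
    have h4 : 0 ≤ (lam l - lam 1)⁻¹ := le_of_lt (by positivity)
    nlinarith [mul_le_mul_of_nonneg_left h2 h3]
  rw [s1, s2, s3]
  linarith [hD]
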